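/- Let B, S, C be entrywise nonnegative, σ > 0, δ > 0, and suppose I_q is nonempty for at least one q. Then the function S′ ↦ G_S(S′, S; δ), restricted to the affine set of P×P matrices S′ with s′_{pq} = s_{pq} for all q and all p ∉ I_q, is strictly convex, and its unique minimizer on that set is S⁺ = U_S(S; δ); equivalently, S⁺ is the unique matrix in that set satisfying, for every q and every p ∈ I_q, d^q_{pp}(δ)·(s′_{pq} − s_{pq}) + (∇_S J)_{pq} = 0. -/

import Mathlib

open Matrix Classical Filter

noncomputable section

/-- Squared Frobenius norm. -/
def frobSq {m n : ℕ} (X : Matrix (Fin m) (Fin n) ℝ) : ℝ := ∑ i, ∑ j, (X i j) ^ 2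

/-- The BNMtF objective J(B,S,C). -/
def objJ {M N P : ℕ} (A : Matrix (Fin M) (Fin N) ℝ) (α β : ℝ)
    (B : Matrix (Fin M) (Fin P) ℝ) (S : Matrix (Fin P) (Fin P) ℝ) (C : Matrix (Fin P) (Fin N) ℝ) : ℝ :=
  (1 / 2) * frobSq (A - B * S * C) + (α / 2) * frobSq (C * Cᵀ - 1) +
    (β / 2) * frobSq (Bᵀ * B - 1)

/-- ∇_B J. -/
def gradB {M N P : ℕ} (A : Matrix (Fin M) (Fin N) ℝ) (β : ℝ)
    (B : Matrix (Fin M) (Fin P) ℝ) (S : Matrix (Fin P) (Fin P) ℝ) (C : Matrix (Fin P) (Fin N) ℝ) : Matrix (Fin M) (Fin P) ℝ :=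
  B * S * C * Cᵀ * Sᵀ - A * Cᵀ * Sᵀ + β • (B * Bᵀ * B) - β • B

/-- ∇_C J. -/
def gradC {M N P : ℕ} (A : Matrix (Fin M) (Fin N) ℝ) (α : ℝ)
    (B : Matrix (Fin M) (Fin P) ℝ) (S : Matrix (Fin P) (Fin P) ℝ) (C : Matrix (Fin P) (Fin N) ℝ) : Matrix (Fin P) (Fin N) ℝ :=
  Sᵀ * Bᵀ * B * S * C - Sᵀ * Bᵀ * A + α • (C * Cᵀ * C) - α • C

/-- ∇_S J. -/
def gradS {M N P : ℕ} (A : Matrix (Fin M) (Fin N) ℝ)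
    (B : Matrix (Fin M) (Fin P) ℝ) (S : Matrix (Fin P) (Fin P) ℝ) (C : Matrix (Fin P) (Fin N) ℝ) : Matrix (Fin P) (Fin P) ℝ :=
  Bᵀ * B * S * C * Cᵀ - Bᵀ * A * Cᵀ

/-- B-part KKT conditions. -/
def KKTB {M N P : ℕ} (A : Matrix (Fin M) (Fin N) ℝ) (β : ℝ)
    (B : Matrix (Fin M) (Fin P) ℝ) (S : Matrix (Fin P) (Fin P) ℝ) (C : Matrix (Fin P) (Fin N) ℝ) : Prop :=
  ∀ m p, 0 ≤ gradB A β B S C m p ∧ gradB A β B S C m p * B m p = 0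

/-- C-part KKT conditions. -/
def KKTC {M N P : ℕ} (A : Matrix (Fin M) (Fin N) ℝ) (α : ℝ)
    (B : Matrix (Fin M) (Fin P) ℝ) (S : Matrix (Fin P) (Fin P) ℝ) (C : Matrix (Fin P) (Fin N) ℝ) : Prop :=
  ∀ q n, 0 ≤ gradC A α B S C q n ∧ gradC A α B S C q n * C q n = 0

/-- S-part KKT conditions. -/
def KKTS {M N P : ℕ} (A : Matrix (Fin M) (Fin N) ℝ)
    (B : Matrix (Fin M) (Fin P) ℝ) (S : Matrix (Fin P) (Fin P) ℝ) (C : Matrix (Fin P) (Fin N) ℝ) : Prop :=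
  ∀ p q, 0 ≤ gradS A B S C p q ∧ gradS A B S C p q * S p q = 0

/-- Full KKT conditions. -/
def KKT {M N P : ℕ} (A : Matrix (Fin M) (Fin N) ℝ) (α β : ℝ)
    (B : Matrix (Fin M) (Fin P) ℝ) (S : Matrix (Fin P) (Fin P) ℝ) (C : Matrix (Fin P) (Fin N) ℝ) : Prop :=
  KKTB A β B S C ∧ KKTS A B S C ∧ KKTC A α B S C

/-- B̄. -/
def Bbar {M N P : ℕ} (A : Matrix (Fin M) (Fin N) ℝ) (β σ : ℝ)
    (B : Matrix (Fin M) (Fin P) ℝ) (S : Matrix (Fin P) (Fin P) ℝ) (C : Matrix (Fin P) (Fin N) ℝ) : Matrix (Fin M) (Fin P) ℝ :=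
  Matrix.of fun m p => if 0 ≤ gradB A β B S C m p then B m p else max (B m p) σ

/-- Denominator matrix of the additive B-update. -/
def denomB {M N P : ℕ} (A : Matrix (Fin M) (Fin N) ℝ) (β σ : ℝ)
    (B : Matrix (Fin M) (Fin P) ℝ) (S : Matrix (Fin P) (Fin P) ℝ) (C : Matrix (Fin P) (Fin N) ℝ) : Matrix (Fin M) (Fin P) ℝ :=
  Bbar A β σ B S C * S * C * Cᵀ * Sᵀ +
    β • (Bbar A β σ B S C * (Bbar A β σ B S C)ᵀ * Bbar A β σ B S C)

/-- Additive B-update U_B(B; δ). -/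
def UB {M N P : ℕ} (A : Matrix (Fin M) (Fin N) ℝ) (β σ : ℝ)
    (B : Matrix (Fin M) (Fin P) ℝ) (S : Matrix (Fin P) (Fin P) ℝ) (C : Matrix (Fin P) (Fin N) ℝ) (δ : ℝ) : Matrix (Fin M) (Fin P) ℝ :=
  Matrix.of fun m p =>
    B m p - Bbar A β σ B S C m p * gradB A β B S C m p / (denomB A β σ B S C m p + δ)

/-- I_m : set of non-KKT indices in row m of B. -/
def IsetB {M N P : ℕ} (A : Matrix (Fin M) (Fin N) ℝ) (β : ℝ)
    (B : Matrix (Fin M) (Fin P) ℝ) (S : Matrix (Fin P) (Fin P) ℝ) (C : Matrix (Fin P) (Fin N) ℝ) (m : Fin M) : Set (Fin P) :=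
  {p | (0 < B m p ∧ gradB A β B S C m p ≠ 0) ∨ (B m p = 0 ∧ gradB A β B S C m p < 0)}

/-- Diagonal entries d^m_{pp}(δ). -/
def dB {M N P : ℕ} (A : Matrix (Fin M) (Fin N) ℝ) (β σ : ℝ)
    (B : Matrix (Fin M) (Fin P) ℝ) (S : Matrix (Fin P) (Fin P) ℝ) (C : Matrix (Fin P) (Fin N) ℝ) (δ : ℝ) (m : Fin M) (p : Fin P) : ℝ :=
  if p ∈ IsetB A β B S C m then (denomB A β σ B S C m p + δ) / Bbar A β σ B S C m p else 0

/-- Auxiliary function G_B(B′, B; δ). -/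
def GB {M N P : ℕ} (A : Matrix (Fin M) (Fin N) ℝ) (α β σ : ℝ)
    (B : Matrix (Fin M) (Fin P) ℝ) (S : Matrix (Fin P) (Fin P) ℝ) (C : Matrix (Fin P) (Fin N) ℝ) (B' : Matrix (Fin M) (Fin P) ℝ) (δ : ℝ) : ℝ :=
  objJ A α β B S C + (∑ m, ∑ p, (B' m p - B m p) * gradB A β B S C m p) +
    (1 / 2) * ∑ m, ∑ p, dB A β σ B S C δ m p * (B' m p - B m p) ^ 2

/-- C̄. -/
def Cbar {M N P : ℕ} (A : Matrix (Fin M) (Fin N) ℝ) (α σ : ℝ)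
    (B : Matrix (Fin M) (Fin P) ℝ) (S : Matrix (Fin P) (Fin P) ℝ) (C : Matrix (Fin P) (Fin N) ℝ) : Matrix (Fin P) (Fin N) ℝ :=
  Matrix.of fun q n => if 0 ≤ gradC A α B S C q n then C q n else max (C q n) σ

/-- Denominator matrix of the additive C-update. -/
def denomC {M N P : ℕ} (A : Matrix (Fin M) (Fin N) ℝ) (α σ : ℝ)
    (B : Matrix (Fin M) (Fin P) ℝ) (S : Matrix (Fin P) (Fin P) ℝ) (C : Matrix (Fin P) (Fin N) ℝ) : Matrix (Fin P) (Fin N) ℝ :=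
  Sᵀ * Bᵀ * B * S * Cbar A α σ B S C +
    α • (Cbar A α σ B S C * (Cbar A α σ B S C)ᵀ * Cbar A α σ B S C)

/-- Additive C-update U_C(C; δ). -/
def UC {M N P : ℕ} (A : Matrix (Fin M) (Fin N) ℝ) (α σ : ℝ)
    (B : Matrix (Fin M) (Fin P) ℝ) (S : Matrix (Fin P) (Fin P) ℝ) (C : Matrix (Fin P) (Fin N) ℝ) (δ : ℝ) : Matrix (Fin P) (Fin N) ℝ :=
  Matrix.of fun q n =>
    C q n - Cbar A α σ B S C q n * gradC A α B S C q n / (denomC A α σ B S C q n + δ)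

/-- S̄. -/
def Sbar {M N P : ℕ} (A : Matrix (Fin M) (Fin N) ℝ) (σ : ℝ)
    (B : Matrix (Fin M) (Fin P) ℝ) (S : Matrix (Fin P) (Fin P) ℝ) (C : Matrix (Fin P) (Fin N) ℝ) : Matrix (Fin P) (Fin P) ℝ :=
  Matrix.of fun p q => if 0 ≤ gradS A B S C p q then S p q else max (S p q) σ

/-- Denominator matrix of the additive S-update. -/
def denomS {M N P : ℕ} (A : Matrix (Fin M) (Fin N) ℝ) (σ : ℝ)
    (B : Matrix (Fin M) (Fin P) ℝ) (S : Matrix (Fin P) (Fin P) ℝ) (C : Matrix (Fin P) (Fin N) ℝ) : Matrix (Fin P) (Fin P) ℝ :=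
  Bᵀ * B * Sbar A σ B S C * C * Cᵀ

/-- Additive S-update U_S(S; δ). -/
def US {M N P : ℕ} (A : Matrix (Fin M) (Fin N) ℝ) (σ : ℝ)
    (B : Matrix (Fin M) (Fin P) ℝ) (S : Matrix (Fin P) (Fin P) ℝ) (C : Matrix (Fin P) (Fin N) ℝ) (δ : ℝ) : Matrix (Fin P) (Fin P) ℝ :=
  Matrix.of fun p q =>
    S p q - Sbar A σ B S C p q * gradS A B S C p q / (denomS A σ B S C p q + δ)

/-- I_q : set of non-KKT indices in column q of S. -/
def IsetS {M N P : ℕ} (A : Matrix (Fin M) (Fin N) ℝ)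
    (B : Matrix (Fin M) (Fin P) ℝ) (S : Matrix (Fin P) (Fin P) ℝ) (C : Matrix (Fin P) (Fin N) ℝ) (q : Fin P) : Set (Fin P) :=
  {p | (0 < S p q ∧ gradS A B S C p q ≠ 0) ∨ (S p q = 0 ∧ gradS A B S C p q < 0)}

/-- Diagonal entries d^q_{pp}(δ). -/
def dS {M N P : ℕ} (A : Matrix (Fin M) (Fin N) ℝ) (σ : ℝ)
    (B : Matrix (Fin M) (Fin P) ℝ) (S : Matrix (Fin P) (Fin P) ℝ) (C : Matrix (Fin P) (Fin N) ℝ) (δ : ℝ) (p q : Fin P) : ℝ :=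
  if p ∈ IsetS A B S C q then (denomS A σ B S C p q + δ) / Sbar A σ B S C p q else 0

/-- Auxiliary function G_S(S′, S; δ). -/
def GS {M N P : ℕ} (A : Matrix (Fin M) (Fin N) ℝ) (α β σ : ℝ)
    (B : Matrix (Fin M) (Fin P) ℝ) (S : Matrix (Fin P) (Fin P) ℝ) (C : Matrix (Fin P) (Fin N) ℝ) (S' : Matrix (Fin P) (Fin P) ℝ) (δ : ℝ) : ℝ :=
  objJ A α β B S C + (∑ p, ∑ q, (S' p q - S p q) * gradS A B S C p q) +
    (1 / 2) * ∑ q, ∑ p, dS A σ B S C δ p q * (S' p q - S p q) ^ 2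

section MyHelpers

variable {M N P : ℕ} (A : Matrix (Fin M) (Fin N) ℝ) (σ : ℝ)
  (B : Matrix (Fin M) (Fin P) ℝ) (S : Matrix (Fin P) (Fin P) ℝ) (C : Matrix (Fin P) (Fin N) ℝ)

lemma my_matmul_nonneg {a b c : ℕ} {X : Matrix (Fin a) (Fin b) ℝ} {Y : Matrix (Fin b) (Fin c) ℝ}
    (hX : ∀ i j, 0 ≤ X i j) (hY : ∀ i j, 0 ≤ Y i j) : ∀ i j, 0 ≤ (X * Y) i j := fun i j => by
  rw [Matrix.mul_apply]
  exact Finset.sum_nonneg fun k _ => mul_nonneg (hX i k) (hY k j)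

lemma my_Sbar_nonneg (hS : ∀ p q, 0 ≤ S p q) (hσ : 0 < σ) :
    ∀ p q, 0 ≤ Sbar A σ B S C p q := fun p q => by
  simp only [Sbar, Matrix.of_apply]
  split
  · exact hS p q
  · exact le_max_of_le_right hσ.le

lemma my_denomS_nonneg (hB : ∀ m p, 0 ≤ B m p) (hS : ∀ p q, 0 ≤ S p q)
    (hC : ∀ q n, 0 ≤ C q n) (hσ : 0 < σ) : ∀ p q, 0 ≤ denomS A σ B S C p q := by
  have h1 : ∀ i j, 0 ≤ Bᵀ i j := fun i j => hB j i
  have h2 : ∀ i j, 0 ≤ Cᵀ i j := fun i j => hC j i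
  exact my_matmul_nonneg (my_matmul_nonneg (my_matmul_nonneg (my_matmul_nonneg h1 hB)
    (my_Sbar_nonneg A σ B S C hS hσ)) hC) h2

lemma my_Sbar_pos (hS : ∀ p q, 0 ≤ S p q) (hσ : 0 < σ) {p q : Fin P}
    (hp : p ∈ IsetS A B S C q) : 0 < Sbar A σ B S C p q := by
  simp only [IsetS, Set.mem_setOf_eq] at hp
  simp only [Sbar, Matrix.of_apply]
  split_ifs with hg
  · rcases hp with ⟨h1, _⟩ | ⟨_, h2⟩
    · exact h1
    · exact absurd hg (not_le.mpr h2)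
  · exact lt_max_of_lt_right hσ

lemma my_dS_nonneg (hB : ∀ m p, 0 ≤ B m p) (hS : ∀ p q, 0 ≤ S p q)
    (hC : ∀ q n, 0 ≤ C q n) (hσ : 0 < σ) {δ : ℝ} (hδ : 0 < δ) (p q : Fin P) :
    0 ≤ dS A σ B S C δ p q := by
  unfold dS
  split_ifs with hp
  · exact div_nonneg (by linarith [my_denomS_nonneg A σ B S C hB hS hC hσ p q]) (my_Sbar_pos A σ B S C hS hσ hp).le
  · exact le_refl 0

lemma my_dS_pos (hB : ∀ m p, 0 ≤ B m p) (hS : ∀ p q, 0 ≤ S p q)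
    (hC : ∀ q n, 0 ≤ C q n) (hσ : 0 < σ) {δ : ℝ} (hδ : 0 < δ) {p q : Fin P}
    (hp : p ∈ IsetS A B S C q) : 0 < dS A σ B S C δ p q := by
  unfold dS
  rw [if_pos hp]
  exact div_pos (by linarith [my_denomS_nonneg A σ B S C hB hS hC hσ p q]) (my_Sbar_pos A σ B S C hS hσ hp)

lemma my_US_eq (hS : ∀ p q, 0 ≤ S p q) {δ : ℝ} {p q : Fin P}
    (hp : p ∉ IsetS A B S C q) : US A σ B S C δ p q = S p q := by
  simp only [IsetS, Set.mem_setOf_eq] at hp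
  push_neg at hp
  simp only [US, Matrix.of_apply, Sbar]
  rcases (hS p q).eq_or_lt with h0 | h0
  · rw [if_pos (h0 ▸ hp.2 h0.symm), ← h0, zero_mul, zero_div, sub_zero]
  · rw [hp.1 h0, mul_zero, zero_div, sub_zero]

lemma my_key (hB : ∀ m p, 0 ≤ B m p) (hS : ∀ p q, 0 ≤ S p q)
    (hC : ∀ q n, 0 ≤ C q n) (hσ : 0 < σ) {δ : ℝ} (hδ : 0 < δ) {p q : Fin P}
    (hp : p ∈ IsetS A B S C q) :
    dS A σ B S C δ p q * (US A σ B S C δ p q - S p q) + gradS A B S C p q = 0 := by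
  have hsb := my_Sbar_pos A σ B S C hS hσ hp
  have hden : 0 < denomS A σ B S C p q + δ := by
    linarith [my_denomS_nonneg A σ B S C hB hS hC hσ p q]
  simp only [dS, if_pos hp, US, Matrix.of_apply]
  field_simp
  ring

/-- Per-entry summand of G_S. -/
def myT (δ : ℝ) (X : Matrix (Fin P) (Fin P) ℝ) (z : Fin P × Fin P) : ℝ :=
  (X z.2 z.1 - S z.2 z.1) * gradS A B S C z.2 z.1 +
    (1 / 2) * (dS A σ B S C δ z.2 z.1 * (X z.2 z.1 - S z.2 z.1) ^ 2)

lemma my_GS_repr (α β : ℝ) (δ : ℝ) (X : Matrix (Fin P) (Fin P) ℝ) :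
    GS A α β σ B S C X δ = objJ A α β B S C +
      ∑ x ∈ Finset.univ ×ˢ (Finset.univ : Finset (Fin P)),
        myT A σ B S C δ X x := by
  simp only [myT]
  rw [GS, Finset.sum_product]
  simp only [Finset.sum_add_distrib]
  rw [Finset.sum_comm (f := fun p q => (X p q - S p q) * gradS A B S C p q)]
  simp only [← Finset.mul_sum]
  ring

end MyHelpers

theorem stmt_11 {M N P : ℕ} (A : Matrix (Fin M) (Fin N) ℝ) (hA : ∀ i j, 0 ≤ A i j)
    (α β σ : ℝ) (hα : 0 < α) (hβ : 0 < β) (hσ : 0 < σ)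
    (B : Matrix (Fin M) (Fin P) ℝ) (S : Matrix (Fin P) (Fin P) ℝ) (C : Matrix (Fin P) (Fin N) ℝ)
    (hB : ∀ m p, 0 ≤ B m p) (hS : ∀ p q, 0 ≤ S p q) (hC : ∀ q n, 0 ≤ C q n)
    (δ : ℝ) (hδ : 0 < δ)
    (hne : ∃ q, (IsetS A B S C q).Nonempty) :
    StrictConvexOn ℝ
        {S' : Matrix (Fin P) (Fin P) ℝ | ∀ p q, p ∉ IsetS A B S C q → S' p q = S p q}
        (fun S' => GS A α β σ B S C S' δ) ∧
    (∀ p q, p ∉ IsetS A B S C q → US A σ B S C δ p q = S p q) ∧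
    (∀ S' : Matrix (Fin P) (Fin P) ℝ, (∀ p q, p ∉ IsetS A B S C q → S' p q = S p q) →
      S' ≠ US A σ B S C δ →
        GS A α β σ B S C (US A σ B S C δ) δ < GS A α β σ B S C S' δ) ∧
    (∀ S' : Matrix (Fin P) (Fin P) ℝ, (∀ p q, p ∉ IsetS A B S C q → S' p q = S p q) →
      ((∀ p q, p ∈ IsetS A B S C q →
          dS A σ B S C δ p q * (S' p q - S p q) + gradS A B S C p q = 0) ↔
        S' = US A σ B S C δ)) := by
  have hdnn := my_dS_nonneg A σ B S C hB hS hC hσ hδ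
  have hdpos : ∀ {p q : Fin P}, p ∈ IsetS A B S C q → 0 < dS A σ B S C δ p q :=
    fun hp => my_dS_pos A σ B S C hB hS hC hσ hδ hp
  have husne : ∀ p q, p ∉ IsetS A B S C q → US A σ B S C δ p q = S p q :=
    fun p q hp => my_US_eq A σ B S C hS hp
  have hkey : ∀ {p q : Fin P}, p ∈ IsetS A B S C q →
      dS A σ B S C δ p q * (US A σ B S C δ p q - S p q) + gradS A B S C p q = 0 :=
    fun hp => my_key A σ B S C hB hS hC hσ hδ hp
  refine ⟨⟨?_, ?_⟩, husne, ?_, ?_⟩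
  · -- convexity of the affine set
    intro x hx y hy a b ha hb hab
    intro p q hp
    simp only [Matrix.add_apply, Matrix.smul_apply, smul_eq_mul, hx p q hp, hy p q hp]
    linear_combination (S p q) * hab
  · -- strict convexity inequality
    intro x hx y hy hxy a b ha hb hab
    have hb1 : b = 1 - a := by linarith
    subst hb1
    obtain ⟨p₀, q₀, hpq⟩ : ∃ p q, x p q ≠ y p q := by
      by_contra h
      push_neg at h
      exact hxy (by ext p q; exact h p q)
    have hp₀ : p₀ ∈ IsetS A B S C q₀ := by
      by_contra hmem
      exact hpq ((hx p₀ q₀ hmem).trans (hy p₀ q₀ hmem).symm)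
    have hsum : ∑ z ∈ Finset.univ ×ˢ (Finset.univ : Finset (Fin P)),
        myT A σ B S C δ (a • x + (1 - a) • y) z <
        ∑ z ∈ Finset.univ ×ˢ (Finset.univ : Finset (Fin P)),
          (a * myT A σ B S C δ x z + (1 - a) * myT A σ B S C δ y z) := by
      refine Finset.sum_lt_sum ?_ ⟨(q₀, p₀),
        Finset.mem_product.mpr ⟨Finset.mem_univ _, Finset.mem_univ _⟩, ?_⟩
      · intro z _
        simp only [myT, Matrix.add_apply, Matrix.smul_apply, smul_eq_mul]
        nlinarith [mul_nonneg (mul_nonneg (mul_pos ha hb).le (hdnn z.2 z.1))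
            (sq_nonneg (x z.2 z.1 - y z.2 z.1)), sq_nonneg (x z.2 z.1 - y z.2 z.1)]
      · simp only [myT, Matrix.add_apply, Matrix.smul_apply, smul_eq_mul]
        have h1 : 0 < (x p₀ q₀ - y p₀ q₀) ^ 2 := by
          have := sub_ne_zero.mpr hpq
          positivity
        nlinarith [mul_pos (mul_pos (mul_pos ha hb) (hdpos hp₀)) h1]
    have hsplit : ∑ z ∈ Finset.univ ×ˢ (Finset.univ : Finset (Fin P)),
        (a * myT A σ B S C δ x z + (1 - a) * myT A σ B S C δ y z) =
        a * ∑ z ∈ Finset.univ ×ˢ (Finset.univ : Finset (Fin P)), myT A σ B S C δ x z +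
        (1 - a) * ∑ z ∈ Finset.univ ×ˢ (Finset.univ : Finset (Fin P)), myT A σ B S C δ y z := by
      simp only [Finset.sum_add_distrib, Finset.mul_sum]
    simp only [my_GS_repr, smul_eq_mul]
    linarith [hsum, hsplit]
  · -- unique minimizer
    intro S' hS' hne'
    rw [my_GS_repr, my_GS_repr]
    apply (add_lt_add_iff_left _).mpr
    obtain ⟨p₀, q₀, hpq⟩ : ∃ p q, S' p q ≠ US A σ B S C δ p q := by
      by_contra h
      push_neg at h
      exact hne' (by ext p q; exact h p q)
    have hp₀ : p₀ ∈ IsetS A B S C q₀ := by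
      by_contra hmem
      exact hpq ((hS' p₀ q₀ hmem).trans (husne p₀ q₀ hmem).symm)
    refine Finset.sum_lt_sum ?_ ⟨(q₀, p₀),
      Finset.mem_product.mpr ⟨Finset.mem_univ _, Finset.mem_univ _⟩, ?_⟩
    · intro z _
      simp only [myT]
      by_cases hmem : z.2 ∈ IsetS A B S C z.1
      · have hg : gradS A B S C z.2 z.1 =
            dS A σ B S C δ z.2 z.1 * (S z.2 z.1 - US A σ B S C δ z.2 z.1) := by
          linarith [hkey hmem]
        rw [hg]
        nlinarith [mul_nonneg (hdpos hmem).le (sq_nonneg (S' z.2 z.1 - US A σ B S C δ z.2 z.1))]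
      · rw [hS' z.2 z.1 hmem, husne z.2 z.1 hmem]
    · simp only [myT]
      have h1 : 0 < (S' p₀ q₀ - US A σ B S C δ p₀ q₀) ^ 2 := by
        have := sub_ne_zero.mpr hpq
        positivity
      have hg : gradS A B S C p₀ q₀ =
          dS A σ B S C δ p₀ q₀ * (S p₀ q₀ - US A σ B S C δ p₀ q₀) := by
        linarith [hkey hp₀]
      rw [hg]
      nlinarith [mul_pos (hdpos hp₀) h1]
  · -- stationarity characterization
    intro S' hS'
    constructor
    · intro h
      ext p q
      by_cases hp : p ∈ IsetS A B S C q
      · have h1 := h p q hp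
        have h2 := hkey hp
        have h3 := hdpos hp
        have h4 : dS A σ B S C δ p q * (S' p q - US A σ B S C δ p q) = 0 := by linarith
        rcases mul_eq_zero.mp h4 with h5 | h5
        · exact absurd h5 h3.ne'
        · linarith [sub_eq_zero.mp h5]
      · rw [hS' p q hp, husne p q hp]
    · rintro rfl
      exact fun p q hp => hkey hp
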